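/- arXiv:1008.2250 — 2 statements merged into one kernel-verified Lean document; each statement's English description precedes it below -/
import Mathlib

section
/- Let T₁,…,T_d be finite trees, each with at least one edge, such that Δ(T_i) is even for all i. Let G = T₁ □ ⋯ □ T_d. Then χ(G²) = 1 + Σ_{i=1}^d Δ(T_i). -/
/-- The square of a graph: two distinct vertices are adjacent if they are
adjacent in `G` or have a common neighbour in `G`. -/
def SimpleGraph.square' {V : Type*} (G : SimpleGraph V) : SimpleGraph V where
  Adj u v := u ≠ v ∧ (G.Adj u v ∨ ∃ w, G.Adj u w ∧ G.Adj w v)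
  symm := ⟨fun u v => by
    rintro ⟨hne, h | ⟨w, h1, h2⟩⟩
    · exact ⟨hne.symm, Or.inl h.symm⟩
    · exact ⟨hne.symm, Or.inr ⟨w, h2.symm, h1.symm⟩⟩⟩
  loopless := ⟨fun u => by rintro ⟨hne, -⟩; exact hne rfl⟩

/-- The cartesian product of a family of graphs. -/
def boxProdPi {d : ℕ} {V : Fin d → Type*} (G : ∀ i, SimpleGraph (V i)) :
    SimpleGraph (∀ i, V i) where
  Adj u v := ∃ i, (G i).Adj (u i) (v i) ∧ ∀ j, j ≠ i → u j = v j
  symm := ⟨fun u v => by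
    rintro ⟨i, h, hj⟩
    exact ⟨i, h.symm, fun j hji => (hj j hji).symm⟩⟩
  loopless := ⟨fun u => by rintro ⟨i, h, -⟩; exact (G i).irrefl h⟩


open SimpleGraph Finset

universe u

lemma induce_reachable_of_support {V : Type u} {G : SimpleGraph V} {s : Set V} :
    ∀ {u v : V} (p : G.Walk u v), (∀ x ∈ p.support, x ∈ s) →
      ∀ (hu : u ∈ s) (hv : v ∈ s), (G.induce s).Reachable ⟨u, hu⟩ ⟨v, hv⟩ := by
  intro u v p
  induction p with
  | nil => intro _ hu hv; exact Reachable.refl _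
  | @cons a b c h q ih =>
    intro hs hu hv
    have hb : b ∈ s := hs b (by simp)
    have hadj : (G.induce s).Adj ⟨a, hu⟩ ⟨b, hb⟩ := h
    exact hadj.reachable.trans (ih (fun x hx => hs x (by simp [hx])) hb hv)

lemma tree_potential : ∀ (n : ℕ) {V : Type u} [Fintype V] (T : SimpleGraph V)
    [DecidableRel T.Adj], Fintype.card V ≤ n → T.IsTree → ∀ (c m : ℕ),
    (∀ v, T.degree v ≤ 2 * m) →
    ∃ f : V → ℤ,
      (∀ u v, T.Adj u v → (c : ℤ) < |f u - f v| ∧ |f u - f v| ≤ (c : ℤ) + m) ∧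
      (∀ u w v, T.Adj u w → T.Adj w v → u ≠ v → f u ≠ f v) := by
  intro n
  induction n with
  | zero =>
    intro V _ T _ hcard hT c m hdeg
    exfalso
    have : 0 < Fintype.card V := Fintype.card_pos_iff.mpr hT.isConnected.nonempty
    omega
  | succ n ih =>
    intro V _ T _ hcard hT c m hdeg
    classical
    by_cases h1 : Fintype.card V ≤ 1
    · refine ⟨fun _ => 0, ?_, ?_⟩
      · intro u v huv
        exact absurd (Fintype.card_le_one_iff.mp h1 u v) huv.ne
      · intro u w v hu hv hne
        exact absurd (Fintype.card_le_one_iff.mp h1 u v) hne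
    push_neg at h1
    -- every vertex has a neighbour
    have hne2 : ∀ v : V, ∃ w, T.Adj v w := by
      intro v
      obtain ⟨w, hw⟩ := Fintype.exists_ne_of_one_lt_card h1 v
      obtain ⟨p⟩ := hT.isConnected v w
      cases p with
      | nil => exact absurd rfl hw
      | cons h q => exact ⟨_, h⟩
    -- find a leaf
    have hedge : T.edgeFinset.card + 1 = Fintype.card V := hT.card_edgeFinset
    have hsum : ∑ v, T.degree v = 2 * T.edgeFinset.card :=
      T.sum_degrees_eq_twice_card_edges
    have hleaf : ∃ v, T.degree v = 1 := by
      by_contra hcon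
      push_neg at hcon
      have h2 : ∀ v, 2 ≤ T.degree v := by
        intro v
        have h0 : 0 < T.degree v := (degree_pos_iff_exists_adj T v).mpr (hne2 v)
        have := hcon v
        omega
      have : 2 * Fintype.card V ≤ ∑ v, T.degree v := by
        calc 2 * Fintype.card V = ∑ _v : V, 2 := by simp [Finset.sum_const, mul_comm]
          _ ≤ ∑ v, T.degree v := Finset.sum_le_sum fun v _ => h2 v
      omega
    obtain ⟨v₀, hv₀⟩ := hleaf
    obtain ⟨w₀, hN⟩ := Finset.card_eq_one.mp hv₀
    have hadj₀ : T.Adj v₀ w₀ := by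
      rw [← mem_neighborFinset, hN]; exact Finset.mem_singleton_self _
    have huniq : ∀ x, T.Adj v₀ x → x = w₀ := by
      intro x hx
      have := (T.mem_neighborFinset v₀ x).mpr hx
      rw [hN] at this
      exact Finset.mem_singleton.mp this
    have hww : w₀ ≠ v₀ := fun h => T.irrefl (h ▸ hadj₀)
    set s : Set V := {x | x ≠ v₀} with hs
    have hw₀s : w₀ ∈ s := hww
    -- the induced graph is a tree
    have hac : (T.induce s).IsAcyclic := by
      intro v p hp
      have hinj : Function.Injective (SimpleGraph.Embedding.induce (G := T) s).toHom :=
        (SimpleGraph.Embedding.induce (G := T) s).injective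
      exact hT.2 _ ((Walk.map_isCycle_iff_of_injective hinj).mpr hp)
    have hconn : (T.induce s).Connected := by
      haveI : Nonempty ↥s := ⟨⟨w₀, hw₀s⟩⟩
      refine Connected.mk fun a b => ?_
      obtain ⟨pw⟩ := hT.isConnected a.1 b.1
      set q : T.Walk a.1 b.1 := (pw.toPath : T.Walk a.1 b.1) with hqdef
      have hqp : q.IsPath := pw.toPath.2
      have hns : v₀ ∉ q.support := by
        intro hmem
        have ha' : (a : V) ≠ v₀ := a.2
        have hb' : (b : V) ≠ v₀ := b.2
        have hq1 : (q.takeUntil v₀ hmem).IsPath := hqp.takeUntil hmem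
        have hq2 : (q.dropUntil v₀ hmem).IsPath := hqp.dropUntil hmem
        obtain ⟨x, hx, q1', hq1'⟩ :=
          Walk.exists_eq_cons_of_ne (Ne.symm ha') (q.takeUntil v₀ hmem).reverse
        obtain ⟨y, hy, q2', hq2'⟩ :=
          Walk.exists_eq_cons_of_ne (Ne.symm hb') (q.dropUntil v₀ hmem)
        have hxmem : x ∈ (q.takeUntil v₀ hmem).support := by
          have : x ∈ (q.takeUntil v₀ hmem).reverse.support := by
            rw [hq1']; simp
          rwa [Walk.support_reverse, List.mem_reverse] at this
        have hymem : y ∈ (q.dropUntil v₀ hmem).support.tail := by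
          have h1 : (q.dropUntil v₀ hmem).support = v₀ :: (q.dropUntil v₀ hmem).support.tail :=
            Walk.support_eq_cons _
          have h2 : y ∈ (q.dropUntil v₀ hmem).support := by rw [hq2']; simp
          rw [h1] at h2
          rcases List.mem_cons.mp h2 with h | h
          · exact absurd h.symm hy.ne
          · exact h
        have hnd := hqp.support_nodup
        rw [← Walk.take_spec q hmem, Walk.support_append] at hnd
        have hdisj := List.disjoint_of_nodup_append hnd
        have hxw : x = w₀ := huniq x hx
        have hyw : y = w₀ := huniq y hy
        exact hdisj hxmem (by rw [hxw, ← hyw]; exact hymem)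
      have hall : ∀ z ∈ q.support, z ∈ s := fun z hz => fun h => hns (h ▸ hz)
      have := induce_reachable_of_support (s := s) q hall a.2 b.2
      simpa using this
    -- decidability and cardinality
    haveI : DecidableRel (T.induce s).Adj := fun a b => ‹DecidableRel T.Adj› a.1 b.1
    have hcards : Fintype.card ↥s ≤ n := by
      have h3 : Fintype.card ↥s < Fintype.card V := by
        have := Fintype.card_subtype_lt (p := fun x => x ≠ v₀) (x := v₀) (by simp)
        calc Fintype.card ↥s = Fintype.card {x : V // x ≠ v₀} :=
              Fintype.card_congr (Equiv.subtypeEquivRight (fun _ => Iff.rfl))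
          _ < Fintype.card V := this
      omega
    have hdeg' : ∀ a : ↥s, (T.induce s).degree a ≤ 2 * m := by
      intro a
      have hle : ((T.induce s).neighborFinset a).card ≤ (T.neighborFinset a.1).card := by
        apply Finset.card_le_card_of_injOn Subtype.val
        · intro x hx
          simp only [Finset.mem_coe, mem_neighborFinset] at *
          exact hx
        · exact fun x _ y _ h => Subtype.ext h
      exact hle.trans (hdeg _)
    obtain ⟨f', hA', hB'⟩ := ih (T.induce s) hcards ⟨hconn, hac⟩ c m hdeg'
    have hm : 1 ≤ m := by have := hdeg v₀; omega
    set base : ℤ := f' ⟨w₀, hw₀s⟩ with hbase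
    set I : Finset ℤ := Finset.Icc ((c : ℤ) + 1) ((c : ℤ) + m) with hI
    have hIcard : I.card = m := by
      rw [hI, Int.card_Icc]
      omega
    set D : Finset ℤ := I.image (fun k => base + k) ∪ I.image (fun k => base - k) with hD
    have hDcard : D.card = 2 * m := by
      rw [hD, Finset.card_union_of_disjoint, Finset.card_image_of_injective _ (add_right_injective base),
        Finset.card_image_of_injective _ (sub_right_injective), hIcard]
      · omega
      · rw [Finset.disjoint_left]
        rintro z hz1 hz2
        obtain ⟨k, hk, rfl⟩ := Finset.mem_image.mp hz1
        obtain ⟨k', hk', he⟩ := Finset.mem_image.mp hz2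
        rw [Finset.mem_Icc] at hk hk'
        omega
    set g : V → ℤ := fun u => if h : u = v₀ then 0 else f' ⟨u, h⟩ with hg
    set F : Finset ℤ := ((T.neighborFinset w₀).erase v₀).image g with hF
    have hFcard : F.card < D.card := by
      have h4 : ((T.neighborFinset w₀).erase v₀).card = T.degree w₀ - 1 := by
        rw [Finset.card_erase_of_mem]
        · rfl
        · rw [mem_neighborFinset]; exact hadj₀.symm
      have h5 := hdeg w₀
      have h6 : 0 < T.degree w₀ := (degree_pos_iff_exists_adj T w₀).mpr ⟨v₀, hadj₀.symm⟩
      have h7 : F.card ≤ ((T.neighborFinset w₀).erase v₀).card := by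
        rw [hF]; exact Finset.card_image_le
      rw [hDcard]
      omega
    have hnsub : ¬ D ⊆ F := fun hsub => absurd (Finset.card_le_card hsub) (by omega)
    obtain ⟨z, hzD, hzF⟩ := Finset.not_subset.mp hnsub
    have hzr : (c : ℤ) < |z - base| ∧ |z - base| ≤ (c : ℤ) + m := by
      rcases Finset.mem_union.mp hzD with h | h <;>
        obtain ⟨k, hk, rfl⟩ := Finset.mem_image.mp h <;>
        rw [Finset.mem_Icc] at hk
      · rw [add_sub_cancel_left, abs_of_pos (by omega)]
        omega
      · rw [sub_sub_cancel_left, abs_neg, abs_of_pos (by omega)]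
        omega
    refine ⟨fun x => if h : x = v₀ then z else f' ⟨x, h⟩, ?_, ?_⟩
    · intro u v huv
      by_cases hu : u = v₀
      · subst hu
        have hv : v = w₀ := huniq v huv
        subst hv
        simp only [dif_pos, dif_neg hww]
        exact hzr
      · by_cases hv : v = v₀
        · subst hv
          have hu' : u = w₀ := huniq u huv.symm
          subst hu'
          simp only [dif_pos, dif_neg hww]; rw [abs_sub_comm]
          exact hzr
        · simp only [dif_neg hu, dif_neg hv]
          exact hA' ⟨u, hu⟩ ⟨v, hv⟩ huv
    · intro u w v huw hwv hnuv
      by_cases hw : w = v₀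
      · have h8 : u = w₀ := huniq u (hw ▸ huw.symm)
        have h9 : v = w₀ := huniq v (hw ▸ hwv)
        exact absurd (h8.trans h9.symm) hnuv
      by_cases hu : u = v₀
      · have h8 : w = w₀ := huniq w (hu ▸ huw)
        have hv : v ≠ v₀ := fun h => hnuv (hu.trans h.symm)
        simp only [dif_pos hu, dif_neg hv]
        intro heq
        apply hzF
        rw [hF]
        apply Finset.mem_image.mpr
        refine ⟨v, ?_, ?_⟩
        · rw [Finset.mem_erase, mem_neighborFinset]
          exact ⟨hv, h8 ▸ hwv⟩
        · rw [hg]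
          simp only [dif_neg hv]
          exact heq.symm
      by_cases hv : v = v₀
      · have h8 : w = w₀ := huniq w (hv ▸ hwv.symm)
        simp only [dif_neg hu, dif_pos hv]
        intro heq
        apply hzF
        rw [hF]
        apply Finset.mem_image.mpr
        refine ⟨u, ?_, ?_⟩
        · rw [Finset.mem_erase, mem_neighborFinset]
          exact ⟨hu, (h8 ▸ huw).symm⟩
        · rw [hg]
          simp only [dif_neg hu]
          exact heq
      · simp only [dif_neg hu, dif_neg hv]
        have hwns : w ≠ v₀ := hw
        exact hB' ⟨u, hu⟩ ⟨w, hwns⟩ ⟨v, hv⟩ huw hwv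
          (fun h => hnuv (congrArg Subtype.val h))

theorem trees_product_square_chromatic_even {d : ℕ} {V : Fin d → Type*}
    [∀ i, Fintype (V i)] (T : ∀ i, SimpleGraph (V i))
    [∀ i, DecidableRel (T i).Adj]
    (hT : ∀ i, (T i).IsTree) (hE : ∀ i, (T i).edgeSet.Nonempty)
    (heven : ∀ i, Even ((T i).maxDegree)) :
    (boxProdPi T).square'.chromaticNumber =
      ((1 + ∑ i, (T i).maxDegree : ℕ) : ℕ∞) := by
  classical
  haveI hVne : ∀ i, Nonempty (V i) := fun i => (hT i).isConnected.nonempty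
  have hhalf : ∀ i, ∃ k, (T i).maxDegree = 2 * k := by
    intro i; obtain ⟨k, hk⟩ := heven i; exact ⟨k, by omega⟩
  choose m hm using hhalf
  set M : ℕ := ∑ i, m i with hM
  set N : ℕ := 1 + ∑ i, (T i).maxDegree with hN
  have hNM : N = 2 * M + 1 := by
    have h1 : ∑ i, (T i).maxDegree = ∑ i, 2 * m i := Finset.sum_congr rfl fun i _ => hm i
    have h2 : ∑ i, 2 * m i = 2 * M := by rw [hM, Finset.mul_sum]
    omega
  set c : Fin d → ℕ := fun i => ∑ j ∈ Finset.Iio i, m j with hc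
  have hins : ∀ i : Fin d, c i + m i = ∑ j ∈ insert i (Finset.Iio i), m j := by
    intro i
    simp only [hc]
    rw [Finset.sum_insert (by simp)]
    omega
  have hcm : ∀ i, c i + m i ≤ M := by
    intro i
    rw [hins i, hM]
    exact Finset.sum_le_sum_of_subset (Finset.subset_univ _)
  have hmono : ∀ i j : Fin d, i < j → c i + m i ≤ c j := by
    intro i j hij
    rw [hins i]
    apply Finset.sum_le_sum_of_subset
    intro k hk
    simp only [Finset.mem_insert, Finset.mem_Iio] at *
    rcases hk with rfl | hk
    · exact hij
    · exact hk.trans hij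
  have hpot : ∀ i, ∃ f : V i → ℤ,
      (∀ u v, (T i).Adj u v → ((c i : ℤ) < |f u - f v| ∧ |f u - f v| ≤ (c i : ℤ) + m i)) ∧
      (∀ u w v, (T i).Adj u w → (T i).Adj w v → u ≠ v → f u ≠ f v) := by
    intro i
    apply tree_potential (Fintype.card (V i)) (T i) le_rfl (hT i) (c i) (m i)
    intro v
    have := (T i).degree_le_maxDegree v
    have := hm i
    omega
  choose f hf using hpot
  haveI : NeZero N := ⟨by omega⟩
  set col : (∀ i, V i) → ZMod N := fun x => (((∑ i, f i (x i)) : ℤ) : ZMod N) with hcol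
  have hproper : ∀ x y, (boxProdPi T).square'.Adj x y → col x ≠ col y := by
    intro x y hadj hceq
    set S : ℤ := ∑ i, (f i (x i) - f i (y i)) with hS
    have hS0 : (S : ZMod N) = 0 := by
      have h1 : S = (∑ i, f i (x i)) - (∑ i, f i (y i)) := by
        rw [hS, Finset.sum_sub_distrib]
      rw [h1]
      push_cast
      rw [sub_eq_zero]
      exact_mod_cast hceq
    have hsingle : ∀ i : Fin d, (∀ j, j ≠ i → x j = y j) → S = f i (x i) - f i (y i) := by
      intro i hag
      rw [hS]
      apply Finset.sum_eq_single_of_mem i (Finset.mem_univ i)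
      intro j _ hj
      rw [hag j hj, sub_self]
    have hgood : S ≠ 0 ∧ |S| ≤ 2 * (M : ℤ) := by
      obtain ⟨hxyne, hcase⟩ := (hadj : x ≠ y ∧ ((∃ i, (T i).Adj (x i) (y i) ∧ ∀ j, j ≠ i → x j = y j) ∨
        ∃ w : (∀ i, V i), (∃ i, (T i).Adj (x i) (w i) ∧ ∀ j, j ≠ i → x j = w j) ∧
          (∃ i, (T i).Adj (w i) (y i) ∧ ∀ j, j ≠ i → w j = y j)))
      rcases hcase with ⟨i, ha, hag⟩ | ⟨w, ⟨i, hxw, hxag⟩, ⟨j, hwy, hwag⟩⟩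
      · have hSeq := hsingle i hag
        obtain ⟨h1, h2⟩ := (hf i).1 _ _ ha
        have hcmi : (c i : ℤ) + m i ≤ (M : ℤ) := by exact_mod_cast hcm i
        constructor
        · rw [hSeq]
          intro h0
          rw [h0] at h1
          simp only [abs_zero] at h1
          exact (Int.natCast_nonneg (c i)).not_gt h1
        · rw [hSeq]; linarith
      · by_cases hij : j = i
        · subst hij
          have hag : ∀ k, k ≠ j → x k = y k := fun k hk => (hxag k hk).trans (hwag k hk)
          have hxyi : x j ≠ y j := by
            intro h
            apply hxyne
            funext k
            by_cases hk : k = j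
            · rw [hk]; exact h
            · exact hag k hk
          have hSeq := hsingle j hag
          have hne : f j (x j) ≠ f j (y j) := (hf j).2 _ _ _ hxw hwy hxyi
          have h1 := ((hf j).1 _ _ hxw).2
          have h2 := ((hf j).1 _ _ hwy).2
          have hcmi : (c j : ℤ) + m j ≤ (M : ℤ) := by exact_mod_cast hcm j
          refine ⟨by rw [hSeq]; exact sub_ne_zero.mpr hne, ?_⟩
          rw [hSeq]
          have h3 : f j (x j) - f j (y j) =
              (f j (x j) - f j (w j)) + (f j (w j) - f j (y j)) := by ring
          rw [h3]
          calc |(f j (x j) - f j (w j)) + (f j (w j) - f j (y j))|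
              ≤ |f j (x j) - f j (w j)| + |f j (w j) - f j (y j)| := abs_add_le _ _
            _ ≤ 2 * (M : ℤ) := by linarith
        · have hia : (T i).Adj (x i) (y i) := by
            have := hwag i (Ne.symm hij)
            rwa [this] at hxw
          have hja : (T j).Adj (x j) (y j) := by
            have := hxag j hij
            rwa [← this] at hwy
          have hSpair : S = (f i (x i) - f i (y i)) + (f j (x j) - f j (y j)) := by
            rw [hS, ← Finset.sum_subset (Finset.subset_univ ({i, j} : Finset (Fin d)))]
            · rw [Finset.sum_pair (fun h => hij h.symm)]
            · intro k _ hknot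
              simp only [Finset.mem_insert, Finset.mem_singleton] at hknot
              push_neg at hknot
              rw [hxag k hknot.1, hwag k hknot.2, sub_self]
          obtain ⟨hai1, hai2⟩ := (hf i).1 _ _ hia
          obtain ⟨haj1, haj2⟩ := (hf j).1 _ _ hja
          have hcmi : (c i : ℤ) + m i ≤ (M : ℤ) := by exact_mod_cast hcm i
          have hcmj : (c j : ℤ) + m j ≤ (M : ℤ) := by exact_mod_cast hcm j
          have hdisj : |f i (x i) - f i (y i)| ≠ |f j (x j) - f j (y j)| := by
            rcases lt_or_gt_of_ne (fun h : i = j => hij h.symm) with h | h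
            · have hmn : (c i : ℤ) + m i ≤ (c j : ℤ) := by exact_mod_cast hmono i j h
              intro heq; linarith
            · have hmn : (c j : ℤ) + m j ≤ (c i : ℤ) := by exact_mod_cast hmono j i h
              intro heq; linarith
          constructor
          · rw [hSpair]
            intro h0
            apply hdisj
            have h4 : f i (x i) - f i (y i) = -(f j (x j) - f j (y j)) := by linarith
            rw [h4, abs_neg]
          · rw [hSpair]
            calc |(f i (x i) - f i (y i)) + (f j (x j) - f j (y j))|
                ≤ |f i (x i) - f i (y i)| + |f j (x j) - f j (y j)| := abs_add_le _ _
              _ ≤ 2 * (M : ℤ) := by linarith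
    obtain ⟨hSne, hSle⟩ := hgood
    have hdvd : (N : ℤ) ∣ S := (ZMod.intCast_zmod_eq_zero_iff_dvd S N).mp hS0
    have hle := Int.le_of_dvd (abs_pos.mpr hSne) ((dvd_abs _ _).mpr hdvd)
    have hNcast : (N : ℤ) = 2 * (M : ℤ) + 1 := by exact_mod_cast hNM
    linarith
  have hub : (boxProdPi T).square'.chromaticNumber ≤ (N : ℕ∞) := by
    have C : (boxProdPi T).square'.Coloring (ZMod N) :=
      SimpleGraph.Coloring.mk col (fun h => hproper _ _ h)
    have h1 := C.colorable.chromaticNumber_le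
    rwa [ZMod.card] at h1
  -- lower bound: clique
  have hmax : ∀ i, ∃ v, (T i).maxDegree = (T i).degree v :=
    fun i => (T i).exists_maximal_degree_vertex
  choose b hb using hmax
  set K : Finset (∀ i, V i) :=
    insert b (Finset.univ.biUnion fun i =>
      ((T i).neighborFinset (b i)).image fun u => Function.update b i u) with hK
  have hadjb : ∀ i u, (T i).Adj (b i) u → (boxProdPi T).Adj b (Function.update b i u) := by
    intro i u h
    show ∃ i', (T i').Adj (b i') (Function.update b i u i') ∧ ∀ j, j ≠ i' → b j = Function.update b i u j
    refine ⟨i, ?_, ?_⟩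
    · simpa [Function.update_self] using h
    · intro k hk; exact (Function.update_of_ne hk u b).symm
  have hmemK : ∀ x ∈ K, x = b ∨ ∃ i u, (T i).Adj (b i) u ∧ x = Function.update b i u := by
    intro x hx
    rw [hK, Finset.mem_insert] at hx
    rcases hx with h | h
    · exact Or.inl h
    · right
      obtain ⟨i, _, h⟩ := Finset.mem_biUnion.mp h
      obtain ⟨u, hu, rfl⟩ := Finset.mem_image.mp h
      rw [mem_neighborFinset] at hu
      exact ⟨i, u, hu, rfl⟩
  have hclique : (boxProdPi T).square'.IsClique ↑K := by
    intro x hx y hy hne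
    show x ≠ y ∧ ((boxProdPi T).Adj x y ∨ ∃ w, (boxProdPi T).Adj x w ∧ (boxProdPi T).Adj w y)
    refine ⟨hne, ?_⟩
    rcases hmemK x (Finset.mem_coe.mp hx) with rfl | ⟨i, u, hu, rfl⟩
    · rcases hmemK y (Finset.mem_coe.mp hy) with rfl | ⟨j, u', hu', rfl⟩
      · exact absurd rfl hne
      · exact Or.inl (hadjb j u' hu')
    · rcases hmemK y (Finset.mem_coe.mp hy) with rfl | ⟨j, u', hu', rfl⟩
      · exact Or.inl (hadjb i u hu).symm
      · exact Or.inr ⟨b, (hadjb i u hu).symm, hadjb j u' hu'⟩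
  have hKcard : K.card = N := by
    have hnotmem : b ∉ (Finset.univ.biUnion fun i =>
        ((T i).neighborFinset (b i)).image fun u => Function.update b i u) := by
      intro hmem'
      obtain ⟨i, _, h⟩ := Finset.mem_biUnion.mp hmem'
      obtain ⟨u, hu, heq⟩ := Finset.mem_image.mp h
      have h1 : u = b i := by
        have := congrFun heq i
        rwa [Function.update_self] at this
      rw [mem_neighborFinset] at hu
      rw [h1] at hu
      exact (T i).irrefl hu
    have hdisj2 : ∀ i ∈ (univ : Finset (Fin d)), ∀ j ∈ (univ : Finset (Fin d)), i ≠ j →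
        Disjoint (((T i).neighborFinset (b i)).image fun u => Function.update b i u)
          (((T j).neighborFinset (b j)).image fun u => Function.update b j u) := by
      intro i _ j _ hij
      rw [Finset.disjoint_left]
      intro x hxi hxj
      obtain ⟨u, hu, rfl⟩ := Finset.mem_image.mp hxi
      obtain ⟨u', hu', heq⟩ := Finset.mem_image.mp hxj
      have h1 : Function.update b j u' i = b i := Function.update_of_ne hij u' b
      have h2 := congrFun heq i
      rw [h1, Function.update_self] at h2
      rw [mem_neighborFinset] at hu
      rw [← h2] at hu
      exact (T i).irrefl hu
    have hcardi : ∀ i ∈ (univ : Finset (Fin d)),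
        (((T i).neighborFinset (b i)).image fun u => Function.update b i u).card
          = (T i).maxDegree := by
      intro i _
      rw [Finset.card_image_of_injOn]
      · rw [card_neighborFinset_eq_degree, ← hb i]
      · intro u _ u' _ h
        simpa using congrFun h i
    rw [hK, Finset.card_insert_of_notMem hnotmem, Finset.card_biUnion hdisj2,
      Finset.sum_congr rfl hcardi, hN]
    omega
  have hlb : (N : ℕ∞) ≤ (boxProdPi T).square'.chromaticNumber := by
    have h1 := hclique.card_le_chromaticNumber
    rwa [hKcard] at h1
  exact le_antisymm hub hlb
end

section
/- Let G = G₁ □ ⋯ □ G_d and suppose x and y are distinct vertices of G with a common neighbour v, where the edge vx is in dimension i and the edge vy is in dimension j with i ≠ j. If c_i are integer colourings of the factors and c(u) := Σ c_i(u_i), and the span sets of edges in distinct factors are disjoint, then c(x) ≠ c(y). -/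
theorem distinct_dimensions_distinct_colours {d : ℕ} {V : Fin d → Type*}
    (G : ∀ i, SimpleGraph (V i)) (c : ∀ i, V i → ℤ)
    (hproper : ∀ i, ∀ u w, (G i).square'.Adj u w → c i u ≠ c i w)
    (hdisj : Pairwise fun i j =>
      Disjoint {n : ℤ | ∃ u w, (G i).Adj u w ∧ |c i u - c i w| = n}
               {n : ℤ | ∃ u w, (G j).Adj u w ∧ |c j u - c j w| = n})
    (v x y : ∀ i, V i) (i j : Fin d) (hij : i ≠ j)
    (hx : (G i).Adj (v i) (x i)) (hx' : ∀ k, k ≠ i → x k = v k)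
    (hy : (G j).Adj (v j) (y j)) (hy' : ∀ k, k ≠ j → y k = v k) :
    (∑ k, c k (x k)) ≠ (∑ k, c k (y k)) := by
  intro hsum
  have hxv : ∑ k, (c k (x k) - c k (v k)) = c i (x i) - c i (v i) := by
    rw [Fintype.sum_eq_single i]
    intro k hk
    rw [hx' k hk, sub_self]
  have hyv : ∑ k, (c k (y k) - c k (v k)) = c j (y j) - c j (v j) := by
    rw [Fintype.sum_eq_single j]
    intro k hk
    rw [hy' k hk, sub_self]
  have ht : c i (x i) - c i (v i) = c j (y j) - c j (v j) := by
    rw [← hxv, ← hyv, Finset.sum_sub_distrib, Finset.sum_sub_distrib, hsum]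
  have h1 : |c i (v i) - c i (x i)| ∈
      {n : ℤ | ∃ u w, (G i).Adj u w ∧ |c i u - c i w| = n} := ⟨v i, x i, hx, rfl⟩
  have h2 : |c i (v i) - c i (x i)| ∈
      {n : ℤ | ∃ u w, (G j).Adj u w ∧ |c j u - c j w| = n} := by
    refine ⟨v j, y j, hy, ?_⟩
    rw [abs_sub_comm (c j (v j)), ← ht, abs_sub_comm]
  exact Set.disjoint_left.mp (hdisj hij) h1 h2
end
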